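/- Let S be a multiplicative subset of a ring R and T a right S-Noetherian point annihilator set for R. If every right ideal in T is S-finite, then R is right S-Noetherian. -/

import Mathlib

open MulOpposite

universe u

/-- `N` is an `S`-finite submodule of the right `R`-module `M`
(where right `R`-modules are modeled as `R`ᵐᵒᵖ-modules, so that
`(op s) • n = n * s` when `M = R`). -/
def SFinite {R : Type*} [Ring R] {M : Type*} [AddCommGroup M] [Module Rᵐᵒᵖ M]
    (S : Set R) (N : Submodule Rᵐᵒᵖ M) : Prop :=
  ∃ s ∈ S, ∃ F : Submodule Rᵐᵒᵖ M, F.FG ∧ F ≤ N ∧ ∀ n ∈ N, (op s) • n ∈ F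

/-- The annihilator of an element `m` of a right `R`-module, as a right ideal of `R`. -/
def annRight {R : Type*} [Ring R] {M : Type*} [AddCommGroup M] [Module Rᵐᵒᵖ M]
    (m : M) : Submodule Rᵐᵒᵖ R where
  carrier := {r | (op r) • m = 0}
  add_mem' {x y} hx hy := by
    simp only [Set.mem_setOf_eq] at *
    rw [op_add, add_smul, hx, hy, add_zero]
  zero_mem' := by simp
  smul_mem' c x hx := by
    simp only [Set.mem_setOf_eq] at *
    have h : op (c • x) = c * op x := by simp [MulOpposite.smul_eq_mul_unop]
    rw [h, mul_smul, hx, smul_zero]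

lemma mem_annRight_iff {R : Type*} [Ring R] {M : Type*} [AddCommGroup M] [Module Rᵐᵒᵖ M]
    (m : M) (r : R) : r ∈ annRight m ↔ (op r) • m = 0 := Iff.rfl

/-- Left multiplication by `x` as an `Rᵐᵒᵖ`-linear map. -/
def lmulLeft {R : Type*} [Ring R] (x : R) : R →ₗ[Rᵐᵒᵖ] R where
  toFun r := x * r
  map_add' a b := mul_add x a b
  map_smul' c r := by
    simp only [RingHom.id_apply, smul_eq_mul_unop, mul_assoc]

theorem point_annihilator_set_S_cohen {R : Type u} [Ring R] (S : Set R)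
    (hS1 : (1 : R) ∈ S) (hSmul : ∀ a ∈ S, ∀ b ∈ S, a * b ∈ S)
    (T : Set (Submodule Rᵐᵒᵖ R))
    (hT : ∀ (M : Type u) [AddCommGroup M] [Module Rᵐᵒᵖ M],
      (∃ m : M, m ≠ 0) → (∀ N : Submodule Rᵐᵒᵖ M, SFinite S N) →
      ∃ m : M, m ≠ 0 ∧ annRight m ∈ T)
    (h : ∀ I ∈ T, SFinite S I) :
    ∀ I : Submodule Rᵐᵒᵖ R, SFinite S I := by
  classical
  by_contra hcon
  push_neg at hcon
  obtain ⟨I0, hI0⟩ := hcon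
  -- Zorn's lemma: get a maximal non-S-finite right ideal P
  obtain ⟨P, -, hPmax⟩ := zorn_le_nonempty₀ {I : Submodule Rᵐᵒᵖ R | ¬ SFinite S I}
    (fun c hcsub hc y hy => by
      refine ⟨sSup c, ?_, fun z hz => le_sSup hz⟩
      rintro ⟨s, hs, F, hFfg, hFle, hF⟩
      obtain ⟨J, hJc, hFJ⟩ :=
        (CompleteLattice.isCompactElement_iff_le_of_directed_sSup_le (Submodule Rᵐᵒᵖ R) F).mp
          ((Submodule.fg_iff_compact F).mp hFfg) c ⟨y, hy⟩ hc.directedOn hFle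
      exact hcsub hJc ⟨s, hs, F, hFfg, hFJ, fun n hn => hF n (le_sSup hJc hn)⟩) I0 hI0
  have hPmem : ¬ SFinite S P := hPmax.1
  -- P ≠ ⊤
  have htop : SFinite S (⊤ : Submodule Rᵐᵒᵖ R) := by
    refine ⟨1, hS1, ⊤, ⟨{1}, ?_⟩, le_rfl, fun n _ => trivial⟩
    rw [eq_top_iff]
    intro r _
    simp only [Finset.coe_singleton]
    exact Submodule.mem_span_singleton.mpr ⟨op r, (op_smul_eq_mul _ _).trans (one_mul r)⟩
  have hPne : P ≠ ⊤ := fun hPe => hPmem (hPe ▸ htop)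
  obtain ⟨x, hx⟩ : ∃ x, x ∉ P := by
    by_contra hall
    push_neg at hall
    exact hPne (eq_top_iff.mpr fun r _ => hall r)
  -- The quotient module R/P is nonzero and S-Noetherian
  have hMne : ∃ m : R ⧸ P, m ≠ 0 :=
    ⟨Submodule.Quotient.mk x, by rwa [Ne, Submodule.Quotient.mk_eq_zero]⟩
  have hMS : ∀ N : Submodule Rᵐᵒᵖ (R ⧸ P), SFinite S N := by
    intro N
    have hPJ : P ≤ N.comap P.mkQ := fun p hp => by
      simp only [Submodule.mem_comap, Submodule.mkQ_apply]
      rw [Submodule.Quotient.mk_eq_zero P |>.mpr hp]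
      exact N.zero_mem
    by_cases hJ : N.comap P.mkQ = P
    · have hNbot : N = ⊥ := by
        rw [← Submodule.map_comap_eq_of_surjective P.mkQ_surjective N, hJ, eq_bot_iff]
        rintro z ⟨r, hr, rfl⟩
        simp [Submodule.Quotient.mk_eq_zero P |>.mpr hr]
      exact ⟨1, hS1, ⊥, Submodule.fg_bot, bot_le, fun n hn => by
        rw [hNbot] at hn; simp [show n = 0 from (Submodule.mem_bot _).mp hn]⟩
    · have hJS : SFinite S (N.comap P.mkQ) := by
        by_contra hns
        exact hJ (le_antisymm (hPmax.2 hns hPJ) hPJ)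
      obtain ⟨s, hs, F, hFfg, hFJ, hF⟩ := hJS
      refine ⟨s, hs, F.map P.mkQ, hFfg.map _, ?_, ?_⟩
      · rw [← Submodule.map_comap_eq_of_surjective P.mkQ_surjective N]
        exact Submodule.map_mono hFJ
      · intro n hn
        obtain ⟨r, rfl⟩ := P.mkQ_surjective n
        have hr : r ∈ N.comap P.mkQ := hn
        exact ⟨op s • r, hF r hr, (P.mkQ.map_smul _ _)⟩
  obtain ⟨m, hm0, hmT⟩ := hT (R ⧸ P) hMne hMS
  obtain ⟨sA, hsA, G, hGfg, hGA, hG⟩ := h _ hmT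
  obtain ⟨y, rfl⟩ := P.mkQ_surjective m
  -- unfold membership in the annihilator
  have hyA : ∀ r, r ∈ annRight (P.mkQ y) ↔ y * r ∈ P := by
    intro r
    rw [mem_annRight_iff, ← P.mkQ.map_smul, op_smul_eq_mul, Submodule.mkQ_apply,
      Submodule.Quotient.mk_eq_zero]
  have hyP : y ∉ P := fun hyP => hm0 (by
    rw [Submodule.mkQ_apply, Submodule.Quotient.mk_eq_zero]; exact hyP)
  -- Q = P + yR is strictly bigger than P, hence S-finite
  set Q := P ⊔ Submodule.span Rᵐᵒᵖ {y} with hQdef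
  have hyQ : y ∈ Q := Submodule.mem_sup_right (Submodule.subset_span rfl)
  have hQS : SFinite S Q := by
    by_contra hns
    exact hyP (hPmax.2 hns le_sup_left hyQ)
  obtain ⟨t, ht, F, hFfg, hFQ, hF⟩ := hQS
  obtain ⟨fs, hfs⟩ := hFfg
  -- decompose the generators of F
  have hdecomp : ∀ f ∈ fs, ∃ pf ∈ P, ∃ a : Rᵐᵒᵖ, f = pf + a • y := by
    intro f hf
    have hfQ : f ∈ Q := hFQ (hfs ▸ Submodule.subset_span hf)
    rw [hQdef, Submodule.mem_sup] at hfQ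
    obtain ⟨pf, hpf, q, hq, rfl⟩ := hfQ
    obtain ⟨a, rfl⟩ := Submodule.mem_span_singleton.mp hq
    exact ⟨pf, hpf, a, rfl⟩
  choose! pf hpf af haf using hdecomp
  -- the finitely generated approximation of P
  set F' := Submodule.span Rᵐᵒᵖ (pf '' fs) ⊔ G.map (lmulLeft y) with hF'def
  have hF'fg : F'.FG := Submodule.FG.sup
    ⟨fs.image pf, by rw [Finset.coe_image]⟩ (hGfg.map _)
  have hF'P : F' ≤ P := by
    refine sup_le (Submodule.span_le.mpr ?_) ?_
    · rintro z ⟨f, hf, rfl⟩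
      exact hpf f hf
    · rintro z ⟨g, hg, rfl⟩
      exact (hyA g).mp (hGA hg)
  -- the key computation
  refine hPmem ⟨t * sA, hSmul t ht sA hsA, F', hF'fg, hF'P, fun z hz => ?_⟩
  have h1 : op t • z ∈ F := hF z (Submodule.mem_sup_left hz)
  rw [← hfs, Submodule.mem_span_finset] at h1
  obtain ⟨c, -, hc⟩ := h1
  set u : Rᵐᵒᵖ := ∑ f ∈ fs, c f * af f with hu_def
  have hsum : op t • z = (∑ f ∈ fs, c f • pf f) + u • y := by
    rw [← hc, hu_def, Finset.sum_smul, ← Finset.sum_add_distrib]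
    refine Finset.sum_congr rfl fun f hf => ?_
    rw [mul_smul, ← smul_add, ← haf f hf]
  have huA : unop u ∈ annRight (P.mkQ y) := by
    rw [hyA]
    have hyu : y * unop u = op t • z - ∑ f ∈ fs, c f • pf f := by
      rw [hsum, ← smul_eq_mul_unop]; abel
    rw [hyu]
    exact sub_mem (P.smul_mem (op t) hz)
      (Submodule.sum_mem P fun f hf => P.smul_mem _ (hpf f hf))
  have hstep : op (t * sA) • z = op sA • (op t • z) := by
    rw [← mul_smul, ← op_mul]
  rw [hstep, hsum, smul_add]
  refine add_mem ?_ ?_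
  · apply Submodule.mem_sup_left
    exact Submodule.smul_mem _ _ (Submodule.sum_mem _ fun f hf =>
      Submodule.smul_mem _ _ (Submodule.subset_span ⟨f, hf, rfl⟩))
  · apply Submodule.mem_sup_right
    refine ⟨op sA • unop u, hG _ huA, ?_⟩
    show y * (op sA • unop u) = op sA • (u • y)
    rw [smul_smul, op_smul_eq_mul, smul_eq_mul_unop, unop_mul, unop_op]
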